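/- Let x ≥ 1 be an integer, set k = 2^x − 1, let l be an odd integer, and let q = exp(lπi/(4(k+1))), a primitive 8(k+1)-th root of unity in ℂ. For an integer j let [j]_q = (q^j − q^{−j})/(q − q^{−1}) denote the quantum integer. Then for every integer m with 0 ≤ m ≤ k, the quantum integer [2m+1]_q is nonzero and there exists a field automorphism σ of ℂ such that σ([2j+1]_q) = [(2j+1)(2m+1)]_q / [2m+1]_q for all integers j with 0 ≤ j ≤ k. -/

import Mathlib

/-- The quantum integer `[j]_q = (q^j - q^{-j})/(q - q⁻¹)`. -/
noncomputable def qint (q : ℂ) (j : ℤ) : ℂ := (q ^ j - q ^ (-j)) / (q - q⁻¹)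

set_option maxHeartbeats 1000000 in
set_option synthInstance.maxHeartbeats 400000 in
/-- Any ring automorphism of a subring of `ℂ` extends to a ring automorphism of `ℂ`. -/
lemma exists_extension_aut {R : Type} [CommRing R] (i : R →+* ℂ)
    (hi : Function.Injective i) (g : R ≃+* R) :
    ∃ σ : ℂ ≃+* ℂ, ∀ z : R, σ (i z) = i (g z) := by
  letI : Algebra R ℂ := i.toAlgebra
  have halg : algebraMap R ℂ = i := rfl
  haveI : FaithfulSMul R ℂ := (faithfulSMul_iff_algebraMap_injective R ℂ).mpr (by rwa [halg])
  obtain ⟨s, hs⟩ := exists_isTranscendenceBasis R ℂ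
  letI := IsAlgClosed.isAlgClosure_of_transcendence_basis (R := R) _ hs
  let e₁ := hs.1.aevalEquiv
  let e₂ : MvPolynomial s R ≃+* MvPolynomial s R := MvPolynomial.mapEquiv _ g
  let e : Algebra.adjoin R (Set.range ((↑) : s → ℂ)) ≃+*
      Algebra.adjoin R (Set.range ((↑) : s → ℂ)) :=
    e₁.symm.toRingEquiv.trans (e₂.trans e₁.toRingEquiv)
  refine ⟨IsAlgClosure.equivOfEquiv ℂ ℂ e, fun z => ?_⟩
  have h1 : i z = algebraMap _ ℂ (algebraMap R (Algebra.adjoin R (Set.range ((↑) : s → ℂ))) z) := by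
    rw [← IsScalarTower.algebraMap_apply, halg]
  have h2 : e (algebraMap R _ z) = algebraMap R _ (g z) := by
    show e₁ (e₂ (e₁.symm (algebraMap R _ z))) = _
    have hC : ∀ w : R, algebraMap R (Algebra.adjoin R (Set.range ((↑) : s → ℂ))) w
        = e₁ (MvPolynomial.C w) := by
      intro w
      rw [← MvPolynomial.algebraMap_eq, AlgEquiv.commutes]
    rw [hC z, AlgEquiv.symm_apply_apply]
    have hmap : e₂ (MvPolynomial.C z) = MvPolynomial.C (g z) := by
      simp [e₂, MvPolynomial.mapEquiv_apply]
    rw [hmap, ← hC]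
  rw [h1, IsAlgClosure.equivOfEquiv_algebraMap, h2, ← IsScalarTower.algebraMap_apply, halg]

open Polynomial in
set_option maxHeartbeats 1000000 in
/-- Given a primitive `N`-th root of unity `q` in `ℂ` and `u` coprime to `N`, there is a ring
automorphism of `ℂ` with `σ q = q ^ u`. -/
lemma exists_aut_pow {q : ℂ} {N : ℕ+} (hq : IsPrimitiveRoot q (N : ℕ)) (u : ℕ)
    (hcop : u.Coprime (N : ℕ)) :
    ∃ σ : ℂ ≃+* ℂ, σ q = q ^ u := by
  set F : Subalgebra ℚ ℂ := Algebra.adjoin ℚ ({q} : Set ℂ) with hF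
  haveI : NeZero (N : ℕ) := ⟨N.ne_zero⟩
  haveI : IsCyclotomicExtension {(N : ℕ)} ℚ F := hq.adjoin_isCyclotomicExtension ℚ
  set ζ : F := ⟨q, Algebra.subset_adjoin rfl⟩ with hζdef
  have hζ : IsPrimitiveRoot ζ (N : ℕ) := by
    exact IsPrimitiveRoot.coe_submonoidClass_iff.mp hq
  haveI : NeZero ((N : ℕ) : ℚ) := ⟨Nat.cast_ne_zero.mpr N.pos.ne'⟩
  have hirr : Irreducible (cyclotomic (N : ℕ) ℚ) := cyclotomic.irreducible_rat N.pos
  have hζ' : IsPrimitiveRoot (ζ ^ u) (N : ℕ) := hζ.pow_of_coprime u hcop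
  have hmin : minpoly ℚ (hζ.powerBasis ℚ).gen = minpoly ℚ (hζ'.powerBasis ℚ).gen := by
    rw [IsPrimitiveRoot.powerBasis_gen, IsPrimitiveRoot.powerBasis_gen,
      ← hζ.minpoly_eq_cyclotomic_of_irreducible hirr,
      ← hζ'.minpoly_eq_cyclotomic_of_irreducible hirr]
  let g : F ≃ₐ[ℚ] F := (hζ.powerBasis ℚ).equivOfMinpoly (hζ'.powerBasis ℚ) hmin
  have hg : g ζ = ζ ^ u := by
    have := (hζ.powerBasis ℚ).equivOfMinpoly_gen (hζ'.powerBasis ℚ) hmin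
    rwa [IsPrimitiveRoot.powerBasis_gen, IsPrimitiveRoot.powerBasis_gen] at this
  obtain ⟨σ, hσ⟩ := exists_extension_aut (F.val.toRingHom) Subtype.val_injective g.toRingEquiv
  refine ⟨σ, ?_⟩
  have := hσ ζ
  simpa [hg] using this

lemma aux_ne (k : ℕ) (l t : ℤ) (hl : Odd l) (ht : Odd t) :
    Complex.exp ((l : ℂ) * (Real.pi : ℂ) * Complex.I / (4 * ((k : ℂ) + 1))) ^ t ≠
    Complex.exp ((l : ℂ) * (Real.pi : ℂ) * Complex.I / (4 * ((k : ℂ) + 1))) ^ (-t) := by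
  set c : ℂ := (l : ℂ) * (Real.pi : ℂ) * Complex.I / (4 * ((k : ℂ) + 1)) with hc
  intro h
  have hq0 : Complex.exp c ≠ 0 := Complex.exp_ne_zero c
  have h2t : Complex.exp c ^ (2 * t) = 1 := by
    calc Complex.exp c ^ (2 * t) = Complex.exp c ^ t * Complex.exp c ^ t := by
          rw [← zpow_add₀ hq0]; ring_nf
      _ = Complex.exp c ^ t * Complex.exp c ^ (-t) := by nth_rw 2 [h]
      _ = 1 := by rw [← zpow_add₀ hq0]; simp
  rw [← Complex.exp_int_mul, Complex.exp_eq_one_iff] at h2t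
  obtain ⟨s, hs⟩ := h2t
  have hπ : (Real.pi : ℂ) ≠ 0 := by exact_mod_cast Real.pi_ne_zero
  have hk : ((k : ℂ) + 1) ≠ 0 := by
    have : ((k + 1 : ℕ) : ℂ) ≠ 0 := Nat.cast_ne_zero.mpr k.succ_ne_zero
    push_cast at this; exact this
  have h2πI : (2 * (Real.pi : ℂ) * Complex.I) ≠ 0 := by
    simp [hπ, Complex.I_ne_zero]
  have key : (t * l : ℤ) = 4 * ((k : ℤ) + 1) * s := by
    have hC : ((t * l : ℤ) : ℂ) = ((4 * ((k : ℤ) + 1) * s : ℤ) : ℂ) := by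
      push_cast
      rw [hc, mul_div_assoc', div_eq_iff (mul_ne_zero (by norm_num : (4 : ℂ) ≠ 0) hk)] at hs
      push_cast at hs
      apply mul_left_cancel₀ h2πI
      linear_combination hs
    exact_mod_cast hC
  have hodd : Odd (t * l) := ht.mul hl
  rw [key] at hodd
  have heven : Even (4 * ((k : ℤ) + 1) * s) := ⟨2 * (((k : ℤ) + 1) * s), by ring⟩
  obtain ⟨a, ha⟩ := hodd
  obtain ⟨b, hb⟩ := heven
  omega

lemma aux_prim (x : ℕ) (hx : 1 ≤ x) (k : ℕ) (hk : k = 2 ^ x - 1) (l : ℤ) (hl : Odd l) :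
    IsPrimitiveRoot (Complex.exp ((l : ℂ) * (Real.pi : ℂ) * Complex.I / (4 * ((k : ℂ) + 1))))
      (8 * (k + 1)) := by
  have hk1 : k + 1 = 2 ^ x := by
    have h1 : 1 ≤ 2 ^ x := Nat.one_le_two_pow
    omega
  set n : ℕ := 8 * (k + 1) with hn
  have hn0 : n ≠ 0 := by positivity
  have hnZ : (0 : ℤ) < (n : ℤ) := by exact_mod_cast Nat.pos_of_ne_zero hn0
  set d : ℤ := l / (n : ℤ) with hd
  set a : ℕ := (l % (n : ℤ)).toNat with ha
  have haZ : (a : ℤ) = l - (n : ℤ) * d := by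
    rw [ha, Int.toNat_of_nonneg (Int.emod_nonneg l hnZ.ne'), Int.emod_def]
  obtain ⟨b, hb⟩ := hl
  have haodd : Odd a := by
    have hZodd : Odd (a : ℤ) := ⟨b - 4 * ((k : ℤ) + 1) * d, by
      rw [haZ, hb, hn]; push_cast; ring⟩
    exact_mod_cast hZodd
  have hcop : a.Coprime n := by
    have hn2 : n = 2 ^ (x + 3) := by
      rw [hn, hk1, pow_add]; ring
    rw [hn2]
    exact Nat.Coprime.pow_right _ haodd.coprime_two_right
  have hnC : (n : ℂ) = 8 * ((k : ℂ) + 1) := by rw [hn]; push_cast; ring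
  have hnC0 : (n : ℂ) ≠ 0 := Nat.cast_ne_zero.mpr hn0
  have hkC : ((k : ℂ) + 1) ≠ 0 := by
    intro h; apply hnC0; rw [hnC, h, mul_zero]
  have hexp : Complex.exp (2 * (Real.pi : ℂ) * Complex.I * ((a : ℂ) / (n : ℂ))) =
      Complex.exp ((l : ℂ) * (Real.pi : ℂ) * Complex.I / (4 * ((k : ℂ) + 1))) := by
    have harg : 2 * (Real.pi : ℂ) * Complex.I * ((a : ℂ) / (n : ℂ)) =
        (l : ℂ) * (Real.pi : ℂ) * Complex.I / (4 * ((k : ℂ) + 1)) - (d : ℂ) *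
          (2 * (Real.pi : ℂ) * Complex.I) := by
      have haC : (a : ℂ) = (l : ℂ) - (n : ℂ) * (d : ℂ) := by exact_mod_cast haZ
      rw [haC, hnC]
      field_simp
      ring
    rw [harg, Complex.exp_sub, Complex.exp_int_mul_two_pi_mul_I, div_one]
  have := Complex.isPrimitiveRoot_exp_of_coprime a n hn0 hcop
  rwa [hexp] at this

/-- Let `x ≥ 1`, `k = 2^x - 1`, `l` odd, and `q = exp(lπi/(4(k+1)))`
(a primitive `8(k+1)`-th root of unity).  Then for every `0 ≤ m ≤ k` the quantum integer
`[2m+1]_q` is nonzero and there is a field automorphism `σ` of `ℂ` with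
`σ([2j+1]_q) = [(2j+1)(2m+1)]_q / [2m+1]_q` for all `0 ≤ j ≤ k`. -/
theorem galois_transitivity_quantum_integers_super
    (x : ℕ) (hx : 1 ≤ x) (k : ℕ) (hk : k = 2 ^ x - 1) (l : ℤ) (hl : Odd l) :
    ∀ m : ℕ, m ≤ k →
      qint (Complex.exp ((l : ℂ) * (Real.pi : ℂ) * Complex.I / (4 * ((k : ℂ) + 1))))
          (2 * (m : ℤ) + 1) ≠ 0 ∧
      ∃ σ : ℂ ≃+* ℂ, ∀ j : ℕ, j ≤ k →
        σ (qint (Complex.exp ((l : ℂ) * (Real.pi : ℂ) * Complex.I / (4 * ((k : ℂ) + 1))))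
            (2 * (j : ℤ) + 1)) =
          qint (Complex.exp ((l : ℂ) * (Real.pi : ℂ) * Complex.I / (4 * ((k : ℂ) + 1))))
              ((2 * (j : ℤ) + 1) * (2 * (m : ℤ) + 1)) /
            qint (Complex.exp ((l : ℂ) * (Real.pi : ℂ) * Complex.I / (4 * ((k : ℂ) + 1))))
              (2 * (m : ℤ) + 1) := by
  intro m hm
  set q : ℂ := Complex.exp ((l : ℂ) * (Real.pi : ℂ) * Complex.I / (4 * ((k : ℂ) + 1))) with hqdef
  have hq0 : q ≠ 0 := Complex.exp_ne_zero _
  -- nonvanishing of numerators and denominators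
  have hne : ∀ t : ℤ, Odd t → q ^ t - q ^ (-t) ≠ 0 := fun t ht =>
    sub_ne_zero.mpr (aux_ne k l t hl ht)
  have hd : q - q⁻¹ ≠ 0 := by
    have := hne 1 odd_one
    rwa [zpow_one, zpow_neg, zpow_one] at this
  have hu : Odd (2 * (m : ℤ) + 1) := ⟨(m : ℤ), by ring⟩
  have hB : q ^ (2 * (m : ℤ) + 1) - q ^ (-(2 * (m : ℤ) + 1)) ≠ 0 := hne _ hu
  have hqintm : qint q (2 * (m : ℤ) + 1) ≠ 0 := div_ne_zero hB hd
  refine ⟨hqintm, ?_⟩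
  -- the automorphism
  set N : ℕ+ := ⟨8 * (k + 1), by positivity⟩ with hN
  have hq : IsPrimitiveRoot q (N : ℕ) := aux_prim x hx k hk l hl
  have hcop : (2 * m + 1).Coprime (N : ℕ) := by
    have hk1 : k + 1 = 2 ^ x := by
      have h1 : 1 ≤ 2 ^ x := Nat.one_le_two_pow
      omega
    have hn2 : (N : ℕ) = 2 ^ (x + 3) := by
      show 8 * (k + 1) = 2 ^ (x + 3)
      rw [hk1, pow_add]; ring
    rw [hn2]
    have hoddm : Odd (2 * m + 1) := ⟨m, by ring⟩
    exact Nat.Coprime.pow_right _ hoddm.coprime_two_right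
  obtain ⟨σ, hσ⟩ := exists_aut_pow hq (2 * m + 1) hcop
  have hσq : σ q = q ^ (2 * (m : ℤ) + 1) := by
    rw [hσ]
    have hcast : ((2 * m + 1 : ℕ) : ℤ) = 2 * (m : ℤ) + 1 := by push_cast; ring
    rw [← hcast, zpow_natCast]
  refine ⟨σ, fun j hj => ?_⟩
  set u : ℤ := 2 * (m : ℤ) + 1 with hudef
  set t : ℤ := 2 * (j : ℤ) + 1 with htdef
  have hmap : σ (qint q t) = (q ^ (u * t) - q ^ (-(u * t))) / (q ^ u - q ^ (-u)) := by
    rw [qint, map_div₀, map_sub, map_zpow₀, map_zpow₀, map_sub, map_inv₀, hσq,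
      ← zpow_mul, ← zpow_mul, ← zpow_neg, mul_neg]
  have hdiv : ∀ A B d : ℂ, d ≠ 0 → (A / d) / (B / d) = A / B := by
    intro A B d hd0
    rcases eq_or_ne B 0 with hB0 | hB0
    · simp [hB0]
    · field_simp
  rw [hmap, qint, qint, hdiv _ _ _ hd, mul_comm u t]
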